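/- arXiv:1509.04364 — 2 statements merged into one kernel-verified Lean document; each statement's English description precedes it below -/
import Mathlib

section
/- Let P : ℝ → ℝ be continuous, 1-periodic, with ∫₀¹ P(s) ds = 0, and let φ : ℝ → ℝ be continuously differentiable with φ and φ' Lebesgue integrable on ℝ and φ(x) → 0 as |x| → ∞. Then for every ε > 0, |∫_ℝ P(x/ε) φ(x) dx| ≤ ε (∫₀¹ |P(s)| ds) (∫_ℝ |φ'(x)| dx). -/
open MeasureTheory Filter

theorem stmt_6 (P : ℝ → ℝ) (hPcont : Continuous P)
    (hPper : ∀ x : ℝ, P (x + 1) = P x)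
    (hPavg : ∫ s in (0:ℝ)..1, P s = 0)
    (φ : ℝ → ℝ) (hφ : ContDiff ℝ 1 φ)
    (hφint : Integrable φ) (hφ'int : Integrable (deriv φ))
    (hφ0 : Tendsto φ (cocompact ℝ) (nhds 0)) :
    ∀ ε : ℝ, 0 < ε →
      |∫ x : ℝ, P (x / ε) * φ x| ≤
        ε * (∫ s in (0:ℝ)..1, |P s|) * ∫ x : ℝ, |deriv φ x| := by
  intro ε hε
  set C : ℝ := ∫ s in (0:ℝ)..1, |P s| with hC
  have hCnn : 0 ≤ C := intervalIntegral.integral_nonneg (by norm_num) (fun x _ => abs_nonneg _)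
  have hPper' : Function.Periodic P 1 := hPper
  -- antiderivative of P
  set Q : ℝ → ℝ := fun y => ∫ s in (0:ℝ)..y, P s with hQdef
  have hQderiv : ∀ y, HasDerivAt Q (P y) y := fun y =>
    (hPcont.integral_hasStrictDerivAt 0 y).hasDerivAt
  have hQper : Function.Periodic Q 1 := by
    intro y
    have h1 : Q (y + 1) - Q y = ∫ s in y..(y+1), P s := by
      simp only [hQdef]
      rw [intervalIntegral.integral_interval_sub_left
        (hPcont.intervalIntegrable _ _) (hPcont.intervalIntegrable _ _)]
    have h2 : (∫ s in y..(y+1), P s) = ∫ s in (0:ℝ)..(0+1), P s :=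
      hPper'.intervalIntegral_add_eq y 0
    have : Q (y + 1) - Q y = 0 := by
      rw [h1, h2]; simpa using hPavg
    linarith
  -- bound on Q
  have hQbound : ∀ y, |Q y| ≤ C := by
    intro y
    have hfr : Q y = Q (Int.fract y) := by
      have : Q (Int.fract y) = Q (y - (⌊y⌋ : ℤ) * 1) := by
        rw [Int.fract]; ring_nf
      rw [this, hQper.sub_int_mul_eq]
    rw [hfr]
    have h0 : (0:ℝ) ≤ Int.fract y := Int.fract_nonneg y
    have h1 : Int.fract y ≤ 1 := (Int.fract_lt_one y).le
    calc |Q (Int.fract y)| ≤ ∫ s in (0:ℝ)..(Int.fract y), |P s| :=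
          intervalIntegral.abs_integral_le_integral_abs h0
      _ ≤ C := by
          refine intervalIntegral.integral_mono_interval (μ := volume) le_rfl h0 h1 ?_ ?_
          · filter_upwards with x using abs_nonneg _
          · exact hPcont.abs.intervalIntegrable (μ := volume) 0 1
    -- done
  -- bound on P
  obtain ⟨M, hM⟩ : ∃ M, ∀ x, ‖P x‖ ≤ M := by
    obtain ⟨M, hM⟩ := (isCompact_Icc (a := (0:ℝ)) (b := 1)).exists_bound_of_continuousOn
      hPcont.continuousOn
    refine ⟨M, fun x => ?_⟩
    have hfr : P x = P (Int.fract x) := by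
      have : P (Int.fract x) = P (x - (⌊x⌋ : ℤ) * 1) := by
        rw [Int.fract]; ring_nf
      rw [this, hPper'.sub_int_mul_eq]
    rw [hfr]
    exact hM _ ⟨Int.fract_nonneg x, (Int.fract_lt_one x).le⟩
  -- set up integration by parts
  set u : ℝ → ℝ := fun x => ε * Q (x / ε) with hu
  have hu' : ∀ x, HasDerivAt u (P (x / ε)) x := by
    intro x
    have h1 : HasDerivAt (fun x : ℝ => x / ε) (1 / ε) x := by
      simpa using (hasDerivAt_id x).div_const ε
    have h2 : HasDerivAt (fun x => Q (x / ε)) (P (x / ε) * (1 / ε)) x :=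
      by have := (hQderiv (x / ε)).comp x h1; exact this
    have := h2.const_mul ε
    convert this using 1
    · rfl
    · rfl
    field_simp [hε.ne']
  have hφderiv : ∀ x, HasDerivAt φ (deriv φ x) x := fun x =>
    (hφ.differentiable (by norm_num) x).hasDerivAt
  have hQcont : Continuous Q :=
    continuous_iff_continuousAt.2 fun y => (hQderiv y).continuousAt
  have hucont : Continuous u := continuous_const.mul (hQcont.comp (continuous_id.div_const ε))
  have hubound : ∀ x, ‖u x‖ ≤ ε * C := by
    intro x
    rw [hu]
    simp only [norm_mul, Real.norm_eq_abs, abs_of_pos hε]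
    exact mul_le_mul_of_nonneg_left (hQbound _) hε.le
  have huv' : Integrable (u * deriv φ) :=
    hφ'int.bdd_mul hucont.aestronglyMeasurable (c := ε * C) (Filter.Eventually.of_forall hubound)
  have hu'v : Integrable ((fun x => P (x / ε)) * φ) :=
    hφint.bdd_mul ((hPcont.comp (continuous_id.div_const ε)).aestronglyMeasurable)
      (c := M) (Filter.Eventually.of_forall fun x => hM _)
  have hφtop : Tendsto φ atTop (nhds 0) :=
    hφ0.mono_left (le_trans le_sup_right (cocompact_eq_atBot_atTop (α := ℝ)).ge)
  have hφbot : Tendsto φ atBot (nhds 0) :=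
    hφ0.mono_left (le_trans le_sup_left (cocompact_eq_atBot_atTop (α := ℝ)).ge)
  have huvlim : ∀ l : Filter ℝ, Tendsto φ l (nhds 0) → Tendsto (u * φ) l (nhds 0) := by
    intro l hl
    rw [tendsto_zero_iff_norm_tendsto_zero]
    apply squeeze_zero (fun x => norm_nonneg _) (g := fun x => (ε * C) * ‖φ x‖)
    · intro x
      simp only [Pi.mul_apply, norm_mul]
      exact mul_le_mul_of_nonneg_right (hubound x) (norm_nonneg _)
    · simpa using (tendsto_zero_iff_norm_tendsto_zero.1 hl).const_mul (ε * C)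
  have key : ∫ x, u x * deriv φ x = (0:ℝ) - 0 - ∫ x, P (x / ε) * φ x :=
    MeasureTheory.integral_mul_deriv_eq_deriv_mul (fun x _ => hu' x) (fun x _ => hφderiv x) huv' hu'v
      (huvlim _ hφbot) (huvlim _ hφtop)
  have keq : |∫ x : ℝ, P (x / ε) * φ x| = |∫ x, u x * deriv φ x| := by
    rw [key]; rw [abs_sub_comm]; simp
  rw [keq]
  have hb : ‖∫ x, u x * deriv φ x‖ ≤ ∫ x, (ε * C) * |deriv φ x| := by
    apply norm_integral_le_of_norm_le ((hφ'int.abs).const_mul (ε * C))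
    filter_upwards with x
    simp only [norm_mul, Real.norm_eq_abs]
    exact mul_le_mul_of_nonneg_right (hubound x) (abs_nonneg _)
  rw [Real.norm_eq_abs] at hb
  calc |∫ x, u x * deriv φ x| ≤ ∫ x, (ε * C) * |deriv φ x| := hb
    _ = ε * C * ∫ x, |deriv φ x| := MeasureTheory.integral_const_mul _ _
end

section
/- Let d ≥ 1, let P : ℝ^d → ℝ be continuous, ℤ^d-periodic, with cell average ⟨P⟩ = ∫_{[0,1]^d} P(x) dx = 0, and let φ : ℝ^d → ℝ be a Schwartz function. Then for every natural number k, lim_{ε→0⁺} ε^{−k} ∫_{ℝ^d} P(x/ε) φ(x) dx = 0. -/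
open MeasureTheory Filter Set Function Topology

namespace Stmt8Aux

/-- Partial derivative on Schwartz space (port of the removed Mathlib definition). -/
noncomputable def SchwartzMap.pderivCLM (𝕜 : Type*) [RCLike 𝕜] {E F : Type*}
    [NormedAddCommGroup E] [NormedSpace ℝ E] [NormedAddCommGroup F] [NormedSpace ℝ F]
    [NormedSpace 𝕜 F] [SMulCommClass ℝ 𝕜 F] (m : E) :
    SchwartzMap E F →L[𝕜] SchwartzMap E F :=
  LineDeriv.lineDerivOpCLM 𝕜 (SchwartzMap E F) m

@[simp]
lemma SchwartzMap.pderivCLM_apply (𝕜 : Type*) [RCLike 𝕜] {E F : Type*}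
    [NormedAddCommGroup E] [NormedSpace ℝ E] [NormedAddCommGroup F] [NormedSpace ℝ F]
    [NormedSpace 𝕜 F] [SMulCommClass ℝ 𝕜 F] (m : E) (f : SchwartzMap E F) (x : E) :
    SchwartzMap.pderivCLM 𝕜 m f x = fderiv ℝ f x m := rfl

-- from part1.lean

/-- Periodicity with respect to the integer lattice. -/
def IsPer {m : ℕ} (f : (Fin m → ℝ) → ℝ) : Prop :=
  ∀ (x : Fin m → ℝ) (k : Fin m → ℤ), f (x + fun i => (k i : ℝ)) = f x

lemma bounded_of_per {m : ℕ} {f : (Fin m → ℝ) → ℝ} (hc : Continuous f) (hp : IsPer f) :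
    ∃ C : ℝ, 0 ≤ C ∧ ∀ x, |f x| ≤ C := by
  obtain ⟨C, hC⟩ := (isCompact_Icc (a := (0 : Fin m → ℝ)) (b := 1)).exists_bound_of_continuousOn
    hc.continuousOn
  refine ⟨max C 0, le_max_right _ _, fun x => ?_⟩
  have hx : f x = f (fun i => Int.fract (x i)) := by
    have := hp (fun i => Int.fract (x i)) (fun i => ⌊x i⌋)
    rw [← this]
    congr 1
    funext i
    simp only [Pi.add_apply]
    exact (Int.fract_add_floor (x i)).symm
  rw [hx]
  refine le_trans (hC _ ?_) (le_max_left _ _)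
  constructor
  · intro i; exact Int.fract_nonneg _
  · intro i; exact (Int.fract_lt_one _).le

/-- Average over the `i`-th coordinate. -/
noncomputable def avg {m : ℕ} (i : Fin m) (f : (Fin m → ℝ) → ℝ) (x : Fin m → ℝ) : ℝ :=
  ∫ t in Icc (0:ℝ) 1, f (update x i t)

lemma avg_bound {m : ℕ} (i : Fin m) {f : (Fin m → ℝ) → ℝ} {C : ℝ} (hc : Continuous f)
    (hb : ∀ x, |f x| ≤ C) (x : Fin m → ℝ) : |avg i f x| ≤ C := by
  have h := norm_setIntegral_le_of_norm_le_const (μ := (volume : Measure ℝ))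
    (s := Icc (0:ℝ) 1) (f := fun t => f (update x i t)) (C := C)
    (by simp [Real.volume_Icc]) (fun t _ => hb _)
  simpa [avg, Real.volume_real_Icc] using h

lemma avg_continuous {m : ℕ} (i : Fin m) {f : (Fin m → ℝ) → ℝ} {C : ℝ}
    (hc : Continuous f) (hb : ∀ x, |f x| ≤ C) : Continuous (avg i f) := by
  apply continuous_of_dominated (bound := fun _ => C)
  · intro x
    exact (hc.comp (continuous_const.update i continuous_id)).aestronglyMeasurable
  · intro x
    exact Eventually.of_forall fun t => hb _
  · exact integrable_const _
  · exact Eventually.of_forall fun t => hc.comp (continuous_id.update i continuous_const)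

lemma avg_per {m : ℕ} (i : Fin m) {f : (Fin m → ℝ) → ℝ} (hp : IsPer f) : IsPer (avg i f) := by
  intro x k
  unfold avg
  congr 1
  funext t
  have : update (x + fun j => (k j : ℝ)) i t
      = update x i t + fun j => ((update k i 0 : Fin m → ℤ) j : ℝ) := by
    funext j
    rcases eq_or_ne j i with rfl | hj
    · simp
    · simp [update_of_ne hj]
  rw [this, hp]

lemma avg_update_self {m : ℕ} (i : Fin m) (f : (Fin m → ℝ) → ℝ) (x : Fin m → ℝ) (s : ℝ) :
    avg i f (update x i s) = avg i f x := by
  unfold avg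
  congr 1
  funext t
  rw [update_idem]

lemma avg_indep {m : ℕ} {i j : Fin m} (hij : j ≠ i) {f : (Fin m → ℝ) → ℝ}
    (h : ∀ x s, f (update x j s) = f x) (x : Fin m → ℝ) (s : ℝ) :
    avg i f (update x j s) = avg i f x := by
  unfold avg
  congr 1
  funext t
  rw [update_comm hij, h]

-- from part2.lean

variable {n : ℕ}

lemma insertNth_eq_update {i : Fin (n+1)} (t : ℝ) (y : Fin n → ℝ) (s : ℝ) :
    (i.insertNth t y : Fin (n+1) → ℝ) = update (i.insertNth s y : Fin (n+1) → ℝ) i t := by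
  rw [Fin.update_insertNth]

lemma smul_insertNth (i : Fin (n+1)) (c t : ℝ) (y : Fin n → ℝ) :
    c • (i.insertNth t y : Fin (n+1) → ℝ) = (i.insertNth (c * t) (c • y) : Fin (n+1) → ℝ) := by
  funext j
  cases j using i.succAboveCases <;> simp

lemma insertNth_eq_affine (i : Fin (n+1)) (t : ℝ) (y : Fin n → ℝ) :
    (i.insertNth t y : Fin (n+1) → ℝ) = (i.insertNth 0 y : Fin (n+1) → ℝ) + t • (Pi.single i 1 : Fin (n+1) → ℝ) := by
  funext j
  cases j using i.succAboveCases with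
  | x => simp
  | p j => simp [Pi.single_eq_of_ne (i.succAbove_ne j)]

/-- The restriction of Lebesgue measure to the unit cell as a product measure. -/
lemma restrict_cell_eq_pi (m : ℕ) :
    (volume : Measure (Fin m → ℝ)).restrict (Icc 0 1)
      = Measure.pi (fun _ : Fin m => (volume : Measure ℝ).restrict (Icc 0 1)) := by
  refine (Measure.pi_eq fun s hs => ?_).symm
  rw [Measure.restrict_apply (MeasurableSet.univ_pi hs)]
  have : Icc (0 : Fin m → ℝ) 1 = Set.pi univ fun _ => Icc (0:ℝ) 1 := by
    rw [Set.pi_univ_Icc]; rfl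
  rw [this, ← Set.pi_inter_distrib, volume_pi_pi]
  exact Finset.prod_congr rfl fun i _ => (Measure.restrict_apply (hs i)).symm

instance : IsProbabilityMeasure ((volume : Measure ℝ).restrict (Icc 0 1)) :=
  ⟨by rw [Measure.restrict_apply_univ]; simp [Real.volume_Icc]⟩

noncomputable abbrev ν1 : Measure ℝ := (volume : Measure ℝ).restrict (Icc 0 1)
noncomputable abbrev νn (n : ℕ) : Measure (Fin n → ℝ) := Measure.pi fun _ => ν1

instance : IsProbabilityMeasure (νn n) := by unfold νn; infer_instance

lemma cell_measurePreserving (i : Fin (n+1)) :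
    MeasurePreserving (MeasurableEquiv.piFinSuccAbove (fun _ : Fin (n+1) => ℝ) i)
      ((volume : Measure (Fin (n+1) → ℝ)).restrict (Icc 0 1)) (ν1.prod (νn n)) := by
  rw [restrict_cell_eq_pi]
  exact measurePreserving_piFinSuccAbove (fun _ => ν1) i

lemma piFinSuccAbove_symm_apply (i : Fin (n+1)) (p : ℝ × (Fin n → ℝ)) :
    (MeasurableEquiv.piFinSuccAbove (fun _ : Fin (n+1) => ℝ) i).symm p
      = i.insertNth p.1 p.2 := rfl

/-- Bounded measurable functions: cell integral via slice decomposition. -/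
lemma cell_integral_decompose (i : Fin (n+1)) (g : (Fin (n+1) → ℝ) → ℝ)
    (hc : Continuous g) {C : ℝ} (hb : ∀ x, |g x| ≤ C) :
    ∫ x in Icc (0 : Fin (n+1) → ℝ) 1, g x
      = ∫ y, (∫ t, g (i.insertNth t y) ∂ν1) ∂(νn n) := by
  have pres := cell_measurePreserving i
  have pres' := pres.symm (MeasurableEquiv.piFinSuccAbove (fun _ : Fin (n+1) => ℝ) i)
  have h1 : ∫ x in Icc (0 : Fin (n+1) → ℝ) 1, g x
      = ∫ p, g (i.insertNth p.1 p.2) ∂(ν1.prod (νn n)) := by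
    rw [← pres'.integral_comp
      (MeasurableEquiv.piFinSuccAbove (fun _ : Fin (n+1) => ℝ) i).symm.measurableEmbedding g]
    rfl
  rw [h1]
  apply integral_prod_symm
  refine Integrable.mono' (integrable_const C) ?_ (Eventually.of_forall fun p => ?_)
  · exact (hc.comp ((continuous_fst.finInsertNth i continuous_snd))).aestronglyMeasurable
  · exact hb _

-- from part3.lean

variable {n : ℕ}

lemma avg_insertNth (i : Fin (n+1)) (f : (Fin (n+1) → ℝ) → ℝ) (t : ℝ) (y : Fin n → ℝ) :
    avg i f (i.insertNth t y) = ∫ s, f (i.insertNth s y) ∂ν1 := by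
  unfold avg
  congr 1
  funext s
  rw [Fin.update_insertNth]

lemma cell_avg (i : Fin (n+1)) (f : (Fin (n+1) → ℝ) → ℝ) {C : ℝ}
    (hc : Continuous f) (hb : ∀ x, |f x| ≤ C) :
    ∫ x in Icc (0 : Fin (n+1) → ℝ) 1, avg i f x = ∫ x in Icc (0 : Fin (n+1) → ℝ) 1, f x := by
  rw [cell_integral_decompose i (avg i f) (avg_continuous i hc hb) (avg_bound i hc hb),
    cell_integral_decompose i f hc hb]
  congr 1
  funext y
  have : ∀ t : ℝ, avg i f (i.insertNth t y) = ∫ s, f (i.insertNth s y) ∂ν1 :=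
    fun t => avg_insertNth i f t y
  rw [integral_congr_ae (Eventually.of_forall this), integral_const]
  simp

-- from part4.lean

variable {n : ℕ}

noncomputable def Aseq (R : (Fin (n+1) → ℝ) → ℝ) : ℕ → ((Fin (n+1) → ℝ) → ℝ)
  | 0 => R
  | (j+1) => if h : j < n+1 then avg ⟨j, h⟩ (Aseq R j) else Aseq R j

lemma Aseq_zero' {R : (Fin (n+1) → ℝ) → ℝ} : Aseq R 0 = R := rfl

lemma Aseq_succ (R : (Fin (n+1) → ℝ) → ℝ) (i : Fin (n+1)) :
    Aseq R ((i:ℕ)+1) = avg i (Aseq R (i:ℕ)) := by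
  simp [Aseq, i.isLt]

variable {R : (Fin (n+1) → ℝ) → ℝ}

lemma Aseq_cont_per (hc : Continuous R) (hp : IsPer R) : ∀ j, Continuous (Aseq R j) ∧ IsPer (Aseq R j) := by
  intro j
  induction j with
  | zero => exact ⟨hc, hp⟩
  | succ j ih =>
    unfold Aseq
    split
    · obtain ⟨C, _, hCb⟩ := bounded_of_per ih.1 ih.2
      exact ⟨avg_continuous _ ih.1 hCb, avg_per _ ih.2⟩
    · exact ih

lemma Aseq_indep : ∀ j, ∀ i : Fin (n+1), (i:ℕ) < j →
    ∀ x s, Aseq R j (update x i s) = Aseq R j x := by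
  intro j
  induction j with
  | zero => intro i hi; omega
  | succ j ih =>
    intro i hi x s
    unfold Aseq
    split
    · rename_i h
      rcases eq_or_ne i ⟨j, h⟩ with rfl | hne
      · exact avg_update_self _ _ _ _
      · have hij : (i:ℕ) < j := by
          rcases Nat.lt_succ_iff_lt_or_eq.1 hi with h' | h'
          · exact h'
          · exact absurd (Fin.ext h') hne
        exact avg_indep hne (fun x s => ih i hij x s) x s
    · rename_i h
      exact ih i (by omega) x s

lemma Aseq_cell (hc : Continuous R) (hp : IsPer R) : ∀ j, ∫ x in Icc (0 : Fin (n+1) → ℝ) 1, Aseq R j x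
    = ∫ x in Icc (0 : Fin (n+1) → ℝ) 1, R x := by
  intro j
  induction j with
  | zero => rfl
  | succ j ih =>
    unfold Aseq
    split
    · obtain ⟨C, _, hCb⟩ := bounded_of_per (Aseq_cont_per hc hp j).1 (Aseq_cont_per hc hp j).2
      rw [cell_avg _ _ (Aseq_cont_per hc hp j).1 hCb, ih]
    · exact ih

lemma const_of_indep {m : ℕ} {g : (Fin m → ℝ) → ℝ}
    (h : ∀ (i : Fin m) x s, g (update x i s) = g x) (x : Fin m → ℝ) : g x = g 0 := by
  have key : ∀ s : Finset (Fin m), g (fun j => if j ∈ s then 0 else x j) = g x := by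
    intro s
    induction s using Finset.induction_on with
    | empty => simp
    | @insert a s' ha ih =>
      have : (fun j => if j ∈ insert a s' then (0:ℝ) else x j)
          = update (fun j => if j ∈ s' then (0:ℝ) else x j) a 0 := by
        funext j
        rcases eq_or_ne j a with rfl | hj
        · simp
        · simp [hj, update_of_ne hj]
      rw [this, h, ih]
  have h2 := key Finset.univ
  have h3 : (fun j => if j ∈ (Finset.univ : Finset (Fin m)) then (0:ℝ) else x j)
      = (0 : Fin m → ℝ) := by funext j; simp
  rw [h3] at h2
  exact h2.symm

lemma cell_volume (m : ℕ) : (volume : Measure (Fin m → ℝ)) (Icc 0 1) = 1 := by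
  have : Icc (0 : Fin m → ℝ) 1 = Set.pi univ fun _ => Icc (0:ℝ) 1 := by
    rw [Set.pi_univ_Icc]; rfl
  rw [this, volume_pi_pi]
  simp [Real.volume_Icc]

lemma Aseq_top_eq_zero (hc : Continuous R) (hp : IsPer R) (h0 : ∫ x in Icc (0 : Fin (n+1) → ℝ) 1, R x = 0) (x : Fin (n+1) → ℝ) :
    Aseq R (n+1) x = 0 := by
  have hconst : ∀ y, Aseq R (n+1) y = Aseq R (n+1) 0 := by
    intro y
    exact const_of_indep (fun i z s => Aseq_indep (n+1) i i.isLt z s) y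
  have hcell := Aseq_cell hc hp (n+1)
  rw [h0] at hcell
  have : ∫ z in Icc (0 : Fin (n+1) → ℝ) 1, Aseq R (n+1) z
      = ∫ z in Icc (0 : Fin (n+1) → ℝ) 1, (fun _ => Aseq R (n+1) 0) z :=
    integral_congr_ae (Eventually.of_forall fun z => hconst z)
  rw [this, setIntegral_const, measureReal_def, cell_volume] at hcell
  simp at hcell
  rw [hconst x, hcell]

-- from part5.lean

variable {n : ℕ}

/-- The potential in direction `i`. -/
noncomputable def Qfun (R : (Fin (n+1) → ℝ) → ℝ) (i : Fin (n+1)) (x : Fin (n+1) → ℝ) : ℝ :=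
  (∫ t in (0:ℝ)..(x i), Aseq R (i:ℕ) (update x i t)) - x i * Aseq R ((i:ℕ)+1) x

variable {R : (Fin (n+1) → ℝ) → ℝ}

lemma Qfun_continuous (hc : Continuous R) (hp : IsPer R) (i : Fin (n+1)) :
    Continuous (Qfun R i) := by
  have hA : Continuous (Aseq R (i:ℕ)) := (Aseq_cont_per hc hp _).1
  have hB : Continuous (Aseq R ((i:ℕ)+1)) := (Aseq_cont_per hc hp _).1
  have h1 : Continuous fun p : (Fin (n+1) → ℝ) × ℝ =>
      ∫ t in (0:ℝ)..p.2, Aseq R (i:ℕ) (update p.1 i t) := by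
    exact intervalIntegral.continuous_parametric_primitive_of_continuous (μ := volume)
      (f := fun x t => Aseq R (i:ℕ) (update x i t)) (a₀ := 0)
      (hA.comp (continuous_fst.update i continuous_snd))
  exact (h1.comp (continuous_id.prodMk (continuous_apply i))).sub
    ((continuous_apply i).mul hB)

lemma Qfun_per (hc : Continuous R) (hp : IsPer R) (i : Fin (n+1)) : IsPer (Qfun R i) := by
  intro x k
  have hA : Continuous (Aseq R (i:ℕ)) := (Aseq_cont_per hc hp _).1
  have hAper : IsPer (Aseq R (i:ℕ)) := (Aseq_cont_per hc hp _).2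
  have hBper : IsPer (Aseq R ((i:ℕ)+1)) := (Aseq_cont_per hc hp _).2
  set h : ℝ → ℝ := fun t => Aseq R (i:ℕ) (update x i t) with hh
  have hhc : Continuous h := hA.comp (continuous_const.update i continuous_id)
  have hint : ∀ a b : ℝ, IntervalIntegrable h volume a b := fun a b => hhc.intervalIntegrable a b
  have hhper : Function.Periodic h 1 := by
    intro t
    have : update x i (t + 1) = update x i t + fun j => ((Pi.single i 1 : Fin (n+1) → ℤ) j : ℝ) := by
      funext j
      rcases eq_or_ne j i with rfl | hj
      · simp
      · simp [update_of_ne hj, Pi.single_eq_of_ne hj]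
    simp only [h, this, hAper _ _]
  have hupd : ∀ t : ℝ, update (x + fun j => (k j : ℝ)) i t
      = update x i t + fun j => ((update k i 0 : Fin (n+1) → ℤ) j : ℝ) := by
    intro t
    funext j
    rcases eq_or_ne j i with rfl | hj
    · simp
    · simp [update_of_ne hj]
  have happ : (x + fun j => (k j : ℝ)) i = x i + k i := rfl
  unfold Qfun
  rw [happ]
  have hint_eq : ∀ t : ℝ, Aseq R (i:ℕ) (update (x + fun j => (k j : ℝ)) i t) = h t := by
    intro t; rw [hupd t, hAper]
  rw [intervalIntegral.integral_congr (g := h) (fun t _ => hint_eq t)]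
  have hsplit : ∫ t in (0:ℝ)..(x i + k i), h t
      = (∫ t in (0:ℝ)..(x i), h t) + ∫ t in (x i)..(x i + k i), h t :=
    (intervalIntegral.integral_add_adjacent_intervals (hint 0 (x i)) (hint (x i) _)).symm
  have hz : ∫ t in (x i)..(x i + k i), h t = (k i : ℝ) * ∫ t in (0:ℝ)..1, h t := by
    have h1 : x i + (k i : ℝ) = x i + (k i) • (1:ℝ) := by simp
    rw [h1, hhper.intervalIntegral_add_zsmul_eq (k i) (x i) hint]
    rw [hhper.intervalIntegral_add_eq (x i) 0]
    simp
  have hBx : Aseq R ((i:ℕ)+1) (x + fun j => (k j : ℝ)) = Aseq R ((i:ℕ)+1) x := hBper x k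
  have havg : Aseq R ((i:ℕ)+1) x = ∫ t in (0:ℝ)..1, h t := by
    rw [Aseq_succ]
    unfold avg
    rw [intervalIntegral.integral_of_le zero_le_one]
    exact integral_Icc_eq_integral_Ioc
  rw [hsplit, hz, hBx]
  rw [← havg]
  push_cast
  ring

lemma Qfun_hasDeriv (hc : Continuous R) (hp : IsPer R) (i : Fin (n+1)) (c : Fin n → ℝ) (t : ℝ) :
    HasDerivAt (fun s => Qfun R i (i.insertNth s c))
      (Aseq R (i:ℕ) (i.insertNth t c) - Aseq R ((i:ℕ)+1) (i.insertNth t c)) t := by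
  have hA : Continuous (Aseq R (i:ℕ)) := (Aseq_cont_per hc hp _).1
  have hBind : ∀ s : ℝ, Aseq R ((i:ℕ)+1) (i.insertNth s c) = Aseq R ((i:ℕ)+1) (i.insertNth 0 c) := by
    intro s
    have : (i.insertNth s c : Fin (n+1) → ℝ) = update (i.insertNth 0 c : Fin (n+1) → ℝ) i s :=
      by rw [Fin.update_insertNth]
    rw [this, Aseq_indep ((i:ℕ)+1) i (by omega)]
  have hfun : (fun s => Qfun R i (i.insertNth s c))
      = fun s => (∫ u in (0:ℝ)..s, Aseq R (i:ℕ) (i.insertNth u c))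
          - s * Aseq R ((i:ℕ)+1) (i.insertNth 0 c) := by
    funext s
    unfold Qfun
    rw [Fin.insertNth_apply_same, hBind s]
    simp only [Fin.update_insertNth]
  rw [hfun]
  have hins : Continuous fun u : ℝ => (i.insertNth u c : Fin (n+1) → ℝ) :=
    (continuous_id : Continuous fun u : ℝ => u).finInsertNth i
      (continuous_const : Continuous fun _ : ℝ => c)
  have hg : Continuous fun u : ℝ => Aseq R (i:ℕ) (i.insertNth u c) := hA.comp hins
  have h1 : HasDerivAt (fun s => ∫ u in (0:ℝ)..s, Aseq R (i:ℕ) (i.insertNth u c))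
      (Aseq R (i:ℕ) (i.insertNth t c)) t :=
    intervalIntegral.integral_hasDerivAt_right (hg.intervalIntegrable _ _)
      (hg.stronglyMeasurableAtFilter _ _) hg.continuousAt
  have h2 : HasDerivAt (fun s : ℝ => s * Aseq R ((i:ℕ)+1) (i.insertNth 0 c))
      (Aseq R ((i:ℕ)+1) (i.insertNth 0 c)) t := by
    simpa using (hasDerivAt_id t).mul_const (Aseq R ((i:ℕ)+1) (i.insertNth 0 c))
  rw [hBind t]
  exact h1.sub h2

-- from part6.lean

variable {n : ℕ}

lemma schwartz_bound (φ : SchwartzMap (Fin (n+1) → ℝ) ℝ) :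
    ∃ K : ℝ, 0 ≤ K ∧ ∀ (z : Fin (n+1) → ℝ) (t : ℝ), |t| ≤ ‖z‖ → |φ z| ≤ K * (1 + t^2)⁻¹ := by
  obtain ⟨C0, hC0pos, hC0⟩ := φ.decay 0 0
  obtain ⟨C2, hC2pos, hC2⟩ := φ.decay 2 0
  refine ⟨C0 + C2, by positivity, fun z t ht => ?_⟩
  have h0 : ‖φ z‖ ≤ C0 := by simpa [norm_iteratedFDeriv_zero] using hC0 z
  have h2 : ‖z‖^2 * ‖φ z‖ ≤ C2 := by simpa [norm_iteratedFDeriv_zero] using hC2 z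
  have hpos : (0:ℝ) < 1 + t^2 := by positivity
  have habs : |φ z| = ‖φ z‖ := (Real.norm_eq_abs _).symm
  rw [← div_eq_mul_inv, le_div_iff₀ hpos, habs]
  nlinarith [norm_nonneg (φ z), sq_abs t, pow_le_pow_left₀ (abs_nonneg t) ht 2]

lemma schwartz_line_deriv (φ : SchwartzMap (Fin (n+1) → ℝ) ℝ) (i : Fin (n+1))
    (y : Fin n → ℝ) (t : ℝ) :
    HasDerivAt (fun s => φ (i.insertNth s y))
      ((SchwartzMap.pderivCLM ℝ (Pi.single i 1) φ) (i.insertNth t y)) t := by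
  have hφ : HasFDerivAt φ (fderiv ℝ φ (i.insertNth t y)) (i.insertNth t y) :=
    φ.differentiableAt.hasFDerivAt
  have hline : HasDerivAt
      (fun s : ℝ => (i.insertNth 0 y : Fin (n+1) → ℝ) + s • (Pi.single i 1 : Fin (n+1) → ℝ))
      (Pi.single i 1 : Fin (n+1) → ℝ) t := by
    simpa using ((hasDerivAt_id t).smul_const (Pi.single i 1 : Fin (n+1) → ℝ)).const_add
      (i.insertNth 0 y : Fin (n+1) → ℝ)
  have hline' : HasDerivAt (fun s : ℝ => (i.insertNth s y : Fin (n+1) → ℝ))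
      (Pi.single i 1 : Fin (n+1) → ℝ) t := by
    have heq : (fun s : ℝ => (i.insertNth 0 y : Fin (n+1) → ℝ)
        + s • (Pi.single i 1 : Fin (n+1) → ℝ))
        = fun s : ℝ => (i.insertNth s y : Fin (n+1) → ℝ) := by
      funext s; rw [← insertNth_eq_affine]
    rwa [heq] at hline
  have := hφ.comp_hasDerivAt t hline'
  simp only [SchwartzMap.pderivCLM_apply]
  exact this

lemma inv_one_add_sq_tendsto_atTop : Tendsto (fun t : ℝ => (1 + t^2)⁻¹) atTop (𝓝 0) := by
  apply tendsto_inv_atTop_zero.comp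
  apply tendsto_atTop_mono (fun t : ℝ => ?_) tendsto_abs_atTop_atTop
  nlinarith [sq_abs t, sq_nonneg (|t| - 1)]

lemma inv_one_add_sq_tendsto_atBot : Tendsto (fun t : ℝ => (1 + t^2)⁻¹) atBot (𝓝 0) := by
  apply tendsto_inv_atTop_zero.comp
  apply tendsto_atTop_mono (fun t : ℝ => ?_) tendsto_abs_atBot_atTop
  nlinarith [sq_abs t, sq_nonneg (|t| - 1)]

-- from part7.lean

variable {n : ℕ}

lemma abs_insertNth_le (i : Fin (n+1)) (t : ℝ) (y : Fin n → ℝ) :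
    |t| ≤ ‖(i.insertNth t y : Fin (n+1) → ℝ)‖ := by
  have := norm_le_pi_norm (i.insertNth t y : Fin (n+1) → ℝ) i
  simpa [Fin.insertNth_apply_same] using this

lemma ibp (i : Fin (n+1)) (g D : (Fin (n+1) → ℝ) → ℝ) (hgc : Continuous g) (hDc : Continuous D)
    {Cg CD : ℝ} (hgb : ∀ x, |g x| ≤ Cg) (hDb : ∀ x, |D x| ≤ CD)
    (hder : ∀ (c : Fin n → ℝ) (t : ℝ),
      HasDerivAt (fun s => g (i.insertNth s c)) (D (i.insertNth t c)) t)
    (φ : SchwartzMap (Fin (n+1) → ℝ) ℝ) :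
    ∫ x : Fin (n+1) → ℝ,
      (D x * φ x + g x * (SchwartzMap.pderivCLM ℝ (Pi.single i 1) φ) x) = 0 := by
  have hCg : 0 ≤ Cg := le_trans (abs_nonneg _) (hgb 0)
  have hCD : 0 ≤ CD := le_trans (abs_nonneg _) (hDb 0)
  set pφ := SchwartzMap.pderivCLM ℝ (Pi.single i 1) φ with hpφ
  set F : (Fin (n+1) → ℝ) → ℝ := fun x => D x * φ x + g x * pφ x with hF
  have hF_int : Integrable F volume := by
    apply Integrable.add
    · exact φ.integrable.bdd_mul (c := CD) hDc.aestronglyMeasurable (Eventually.of_forall fun x => hDb x)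
    · exact pφ.integrable.bdd_mul (c := Cg) hgc.aestronglyMeasurable (Eventually.of_forall fun x => hgb x)
  have hFc : Continuous F := ((hDc.mul φ.continuous).add (hgc.mul pφ.continuous))
  set e := MeasurableEquiv.piFinSuccAbove (fun _ : Fin (n+1) => ℝ) i with he
  have hsymm : MeasurePreserving e.symm volume volume :=
    (volume_preserving_piFinSuccAbove (fun _ : Fin (n+1) => ℝ) i).symm e
  have h1 : ∫ x, F x = ∫ p : ℝ × (Fin n → ℝ), F (i.insertNth p.1 p.2) := by
    rw [← hsymm.integral_comp e.symm.measurableEmbedding F]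
    rfl
  have hcomp_int : Integrable (fun p : ℝ × (Fin n → ℝ) => F (i.insertNth p.1 p.2))
      ((volume : Measure ℝ).prod (volume : Measure (Fin n → ℝ))) := by
    have h2 : Integrable (F ∘ e.symm) volume :=
      (hsymm.integrable_comp hF_int.aestronglyMeasurable).2 hF_int
    rw [← Measure.volume_eq_prod]
    exact h2
  obtain ⟨Kφ, hKφ0, hKφ⟩ := schwartz_bound φ
  obtain ⟨Kp, hKp0, hKp⟩ := schwartz_bound pφ
  rw [h1, ← Measure.volume_eq_prod (α := ℝ) (β := Fin n → ℝ)] at *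
  rw [Measure.volume_eq_prod (α := ℝ) (β := Fin n → ℝ)]
  rw [integral_prod_symm _ hcomp_int]
  have hslice : ∀ y : Fin n → ℝ, (∫ t : ℝ, F (i.insertNth t y)) = 0 := by
    intro y
    have hins : Continuous fun u : ℝ => (i.insertNth u y : Fin (n+1) → ℝ) :=
      (continuous_id : Continuous fun u : ℝ => u).finInsertNth i
        (continuous_const : Continuous fun _ : ℝ => y)
    have hbound : ∀ t : ℝ, ‖F (i.insertNth t y)‖ ≤ (CD * Kφ + Cg * Kp) * (1 + t^2)⁻¹ := by
      intro t
      have h1' := hKφ (i.insertNth t y) t (abs_insertNth_le i t y)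
      have h2' := hKp (i.insertNth t y) t (abs_insertNth_le i t y)
      have hinv : (0:ℝ) ≤ (1 + t^2)⁻¹ := by positivity
      simp only [hF, Real.norm_eq_abs]
      calc |D _ * φ _ + g _ * pφ _| ≤ |D _| * |φ _| + |g _| * |pφ _| := by
            exact (abs_add_le _ _).trans (by rw [abs_mul, abs_mul])
      _ ≤ CD * (Kφ * (1 + t^2)⁻¹) + Cg * (Kp * (1 + t^2)⁻¹) := by
            apply add_le_add
            · exact mul_le_mul (hDb _) (by linarith [h1']) (abs_nonneg _) hCD
            · exact mul_le_mul (hgb _) (by linarith [h2']) (abs_nonneg _) hCg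
      _ = (CD * Kφ + Cg * Kp) * (1 + t^2)⁻¹ := by ring
    have hint : Integrable (fun t : ℝ => F (i.insertNth t y)) volume := by
      apply Integrable.mono' (integrable_inv_one_add_sq.const_mul (CD * Kφ + Cg * Kp))
        (hFc.comp hins).aestronglyMeasurable
      exact Eventually.of_forall hbound
    have hderiv : ∀ t : ℝ, HasDerivAt (fun s => g (i.insertNth s y) * φ (i.insertNth s y))
        (F (i.insertNth t y)) t := fun t => (hder y t).mul (schwartz_line_deriv φ i y t)
    have hprod_bound : ∀ t : ℝ, ‖g (i.insertNth t y) * φ (i.insertNth t y)‖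
        ≤ Cg * Kφ * (1 + t^2)⁻¹ := by
      intro t
      have h1' := hKφ (i.insertNth t y) t (abs_insertNth_le i t y)
      rw [Real.norm_eq_abs, abs_mul]
      calc |g _| * |φ _| ≤ Cg * (Kφ * (1 + t^2)⁻¹) :=
            mul_le_mul (hgb _) h1' (abs_nonneg _) hCg
      _ = Cg * Kφ * (1 + t^2)⁻¹ := by ring
    have htop : Tendsto (fun t => g (i.insertNth t y) * φ (i.insertNth t y)) atTop (𝓝 0) := by
      apply squeeze_zero_norm hprod_bound
      simpa using inv_one_add_sq_tendsto_atTop.const_mul (Cg * Kφ)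
    have hbot : Tendsto (fun t => g (i.insertNth t y) * φ (i.insertNth t y)) atBot (𝓝 0) := by
      apply squeeze_zero_norm hprod_bound
      simpa using inv_one_add_sq_tendsto_atBot.const_mul (Cg * Kφ)
    have := integral_of_hasDerivAt_of_tendsto hderiv hint hbot htop
    rw [this]
    ring
  rw [integral_congr_ae (Eventually.of_forall fun y => hslice y)]
  simp

-- from part8.lean

variable {n : ℕ}

variable {R : (Fin (n+1) → ℝ) → ℝ}

lemma key_identity (hc : Continuous R) (hp : IsPer R)
    (h0 : ∫ x in Icc (0 : Fin (n+1) → ℝ) 1, R x = 0)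
    (φ : SchwartzMap (Fin (n+1) → ℝ) ℝ) {ε : ℝ} (hε : 0 < ε) :
    ∫ x : Fin (n+1) → ℝ, R (ε⁻¹ • x) * φ x
      = -ε * ∑ i : Fin (n+1), ∫ x : Fin (n+1) → ℝ,
          Qfun R i (ε⁻¹ • x) * (SchwartzMap.pderivCLM ℝ (Pi.single i 1) φ) x := by
  have hεinv : (0:ℝ) < ε⁻¹ := inv_pos.2 hε
  set pφ : Fin (n+1) → (Fin (n+1) → ℝ) → ℝ :=
    fun i => (SchwartzMap.pderivCLM ℝ (Pi.single i 1) φ : (Fin (n+1) → ℝ) → ℝ) with hpφ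
  set g : Fin (n+1) → (Fin (n+1) → ℝ) → ℝ := fun i x => Qfun R i (ε⁻¹ • x) with hg
  set D : Fin (n+1) → (Fin (n+1) → ℝ) → ℝ :=
    fun i x => ε⁻¹ * (Aseq R (i:ℕ) (ε⁻¹ • x) - Aseq R ((i:ℕ)+1) (ε⁻¹ • x)) with hD
  have hsmul : Continuous fun x : Fin (n+1) → ℝ => ε⁻¹ • x :=
    continuous_id.const_smul ε⁻¹
  have hgc : ∀ i, Continuous (g i) := fun i => (Qfun_continuous hc hp i).comp hsmul
  have hDc : ∀ i, Continuous (D i) := by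
    intro i
    exact continuous_const.mul
      ((((Aseq_cont_per hc hp i).1).comp hsmul).sub (((Aseq_cont_per hc hp (i+1)).1).comp hsmul))
  have hQb : ∀ i : Fin (n+1), ∃ C : ℝ, 0 ≤ C ∧ ∀ x, |Qfun R i x| ≤ C :=
    fun i => bounded_of_per (Qfun_continuous hc hp i) (Qfun_per hc hp i)
  have hAb : ∀ j : ℕ, ∃ C : ℝ, 0 ≤ C ∧ ∀ x, |Aseq R j x| ≤ C :=
    fun j => bounded_of_per (Aseq_cont_per hc hp j).1 (Aseq_cont_per hc hp j).2
  have hibp : ∀ i : Fin (n+1), ∫ x, (D i x * φ x + g i x * pφ i x) = 0 := by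
    intro i
    obtain ⟨Cg, hCg0, hCg⟩ := hQb i
    obtain ⟨CA, hCA0, hCA⟩ := hAb (i:ℕ)
    obtain ⟨CB, hCB0, hCB⟩ := hAb ((i:ℕ)+1)
    apply ibp i (g i) (D i) (hgc i) (hDc i) (Cg := Cg) (CD := ε⁻¹ * (CA + CB))
    · intro x; exact hCg _
    · intro x
      simp only [hD, abs_mul, abs_of_pos hεinv]
      apply mul_le_mul_of_nonneg_left _ hεinv.le
      exact (abs_sub _ _).trans (add_le_add (hCA _) (hCB _))
    · intro c t
      have heq : (fun s => g i (i.insertNth s c))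
          = (fun u => Qfun R i (i.insertNth u (ε⁻¹ • c))) ∘ (fun s : ℝ => ε⁻¹ * s) := by
        funext s
        simp only [hg, comp_apply, smul_insertNth]
      have hQ := Qfun_hasDeriv hc hp i (ε⁻¹ • c) (ε⁻¹ * t)
      have hmul : HasDerivAt (fun s : ℝ => ε⁻¹ * s) ε⁻¹ t := by
        simpa using (hasDerivAt_id t).const_mul ε⁻¹
      have hcomp := hQ.comp t hmul
      rw [heq]
      refine hcomp.congr_deriv ?_
      simp only [hD, smul_insertNth]
      ring
  have hφint := φ.integrable (μ := (volume : Measure (Fin (n+1) → ℝ)))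
  have hint1 : ∀ i : Fin (n+1), Integrable (fun x => D i x * φ x) := by
    intro i
    obtain ⟨CA, hCA0, hCA⟩ := hAb (i:ℕ)
    obtain ⟨CB, hCB0, hCB⟩ := hAb ((i:ℕ)+1)
    apply hφint.bdd_mul (c := ε⁻¹ * (CA + CB)) (hDc i).aestronglyMeasurable
    refine Eventually.of_forall fun x => ?_
    simp only [hD, Real.norm_eq_abs, abs_mul, abs_of_pos hεinv]
    apply mul_le_mul_of_nonneg_left _ hεinv.le
    exact (abs_sub _ _).trans (add_le_add (hCA _) (hCB _))
  have hint2 : ∀ i : Fin (n+1), Integrable (fun x => g i x * pφ i x) := by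
    intro i
    obtain ⟨Cg, hCg0, hCg⟩ := hQb i
    exact (SchwartzMap.pderivCLM ℝ (Pi.single i 1) φ).integrable.bdd_mul (c := Cg)
      (hgc i).aestronglyMeasurable (Eventually.of_forall fun x => hCg _)
  have hsplit : ∀ i : Fin (n+1), ∫ x, D i x * φ x = - ∫ x, g i x * pφ i x := by
    intro i
    have h := hibp i
    rw [integral_add (hint1 i) (hint2 i)] at h
    linarith
  have hsum : ∑ i : Fin (n+1), ∫ x, D i x * φ x
      = - ∑ i : Fin (n+1), ∫ x, g i x * pφ i x := by
    rw [Finset.sum_congr rfl fun i _ => hsplit i, Finset.sum_neg_distrib]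
  have hsum2 : ∑ i : Fin (n+1), ∫ x, D i x * φ x = ∫ x, ∑ i : Fin (n+1), D i x * φ x :=
    (integral_finset_sum Finset.univ fun i _ => hint1 i).symm
  have hptw : ∀ x : Fin (n+1) → ℝ, (∑ i : Fin (n+1), D i x * φ x)
      = ε⁻¹ * (R (ε⁻¹ • x) * φ x) := by
    intro x
    rw [← Finset.sum_mul]
    have : (∑ i : Fin (n+1), D i x) = ε⁻¹ * R (ε⁻¹ • x) := by
      simp only [hD]
      rw [← Finset.mul_sum]
      congr 1
      rw [Fin.sum_univ_eq_sum_range (fun j => Aseq R j (ε⁻¹ • x) - Aseq R (j+1) (ε⁻¹ • x)) (n+1)]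
      rw [Finset.sum_range_sub' (fun j => Aseq R j (ε⁻¹ • x)) (n+1)]
      rw [Aseq_top_eq_zero hc hp h0, Aseq_zero', sub_zero]
    rw [this]
    ring
  have hεi : ε⁻¹ * ∫ x, R (ε⁻¹ • x) * φ x = - ∑ i : Fin (n+1), ∫ x, g i x * pφ i x := by
    rw [← hsum, hsum2]
    rw [integral_congr_ae (Eventually.of_forall hptw), integral_const_mul]
  have hne : ε ≠ 0 := hε.ne'
  calc ∫ x, R (ε⁻¹ • x) * φ x = ε * (ε⁻¹ * ∫ x, R (ε⁻¹ • x) * φ x) := by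
        field_simp
  _ = ε * (- ∑ i : Fin (n+1), ∫ x, g i x * pφ i x) := by rw [hεi]
  _ = -ε * ∑ i : Fin (n+1), ∫ x, g i x * pφ i x := by ring

-- from part9.lean

variable {n : ℕ}

lemma integral_pderiv_zero (i : Fin (n+1)) (φ : SchwartzMap (Fin (n+1) → ℝ) ℝ) :
    ∫ x : Fin (n+1) → ℝ, (SchwartzMap.pderivCLM ℝ (Pi.single i 1) φ) x = 0 := by
  have h := ibp i (fun _ => 1) (fun _ => 0) continuous_const continuous_const
    (Cg := 1) (CD := 0) (fun x => by norm_num) (fun x => by norm_num)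
    (fun c t => by simpa using hasDerivAt_const t (1:ℝ)) φ
  simpa using h

theorem master (k : ℕ) : ∀ (R : (Fin (n+1) → ℝ) → ℝ), Continuous R → IsPer R →
    (∫ x in Icc (0 : Fin (n+1) → ℝ) 1, R x = 0) → ∀ φ : SchwartzMap (Fin (n+1) → ℝ) ℝ,
    Tendsto (fun ε : ℝ => (∫ x : Fin (n+1) → ℝ, R (ε⁻¹ • x) * φ x) / ε ^ k)
      (𝓝[>] (0:ℝ)) (𝓝 0) := by
  induction k with
  | zero =>
    intro R hc hp h0 φ
    choose CQ hCQ0 hCQ using fun i : Fin (n+1) =>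
      bounded_of_per (Qfun_continuous hc hp i) (Qfun_per hc hp i)
    set M : ℝ := ∑ i : Fin (n+1), CQ i *
      ∫ x : Fin (n+1) → ℝ, ‖(SchwartzMap.pderivCLM ℝ (Pi.single i 1) φ) x‖ with hM
    have hboundJ : ∀ (i : Fin (n+1)) (ε : ℝ), 0 < ε →
        ‖∫ x : Fin (n+1) → ℝ, Qfun R i (ε⁻¹ • x)
          * (SchwartzMap.pderivCLM ℝ (Pi.single i 1) φ) x‖
        ≤ CQ i * ∫ x : Fin (n+1) → ℝ, ‖(SchwartzMap.pderivCLM ℝ (Pi.single i 1) φ) x‖ := by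
      intro i ε hε
      rw [← integral_const_mul]
      apply norm_integral_le_of_norm_le
        (((SchwartzMap.pderivCLM ℝ (Pi.single i 1) φ).integrable.norm).const_mul (CQ i))
      apply Eventually.of_forall
      intro x
      rw [Real.norm_eq_abs, abs_mul]
      exact mul_le_mul_of_nonneg_right (hCQ i _) (abs_nonneg _)
    have hb : ∀ᶠ ε in 𝓝[>] (0:ℝ),
        ‖(∫ x : Fin (n+1) → ℝ, R (ε⁻¹ • x) * φ x) / ε ^ (0:ℕ)‖ ≤ ε * M := by
      filter_upwards [self_mem_nhdsWithin] with ε (hε : ε ∈ Ioi (0:ℝ))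
      rw [pow_zero, div_one, key_identity hc hp h0 φ hε]
      rw [norm_mul, norm_neg, Real.norm_eq_abs, abs_of_pos hε]
      apply mul_le_mul_of_nonneg_left _ (le_of_lt hε)
      refine le_trans (norm_sum_le _ _) ?_
      exact Finset.sum_le_sum fun i _ => hboundJ i ε hε
    have ht : Tendsto (fun ε : ℝ => ε * M) (𝓝[>] (0:ℝ)) (𝓝 0) := by
      have : Tendsto (fun ε : ℝ => ε * M) (𝓝 0) (𝓝 (0 * M)) :=
        (continuous_id.mul continuous_const).tendsto 0
      rw [zero_mul] at this
      exact this.mono_left nhdsWithin_le_nhds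
    exact squeeze_zero_norm' hb ht
  | succ k ih =>
    intro R hc hp h0 φ
    set qc : Fin (n+1) → ℝ := fun i => ∫ x in Icc (0 : Fin (n+1) → ℝ) 1, Qfun R i x with hqc
    set Rs : Fin (n+1) → (Fin (n+1) → ℝ) → ℝ := fun i x => Qfun R i x - qc i with hRs
    have hRsc : ∀ i, Continuous (Rs i) := fun i => (Qfun_continuous hc hp i).sub continuous_const
    have hRsp : ∀ i, IsPer (Rs i) := by
      intro i x k'
      simp only [hRs]
      rw [Qfun_per hc hp i x k']
    have hRs0 : ∀ i, ∫ x in Icc (0 : Fin (n+1) → ℝ) 1, Rs i x = 0 := by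
      intro i
      have hQint : IntegrableOn (Qfun R i) (Icc (0 : Fin (n+1) → ℝ) 1) volume :=
        (Qfun_continuous hc hp i).continuousOn.integrableOn_compact isCompact_Icc
      simp only [hRs]
      rw [integral_sub hQint (integrableOn_const (by rw [cell_volume]; norm_num))]
      rw [setIntegral_const, measureReal_def, cell_volume]
      simp [hqc]
    have hIH : ∀ i : Fin (n+1), Tendsto (fun ε : ℝ =>
        (∫ x : Fin (n+1) → ℝ, Rs i (ε⁻¹ • x) * (SchwartzMap.pderivCLM ℝ (Pi.single i 1) φ) x)
          / ε ^ k) (𝓝[>] (0:ℝ)) (𝓝 0) :=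
      fun i => ih (Rs i) (hRsc i) (hRsp i) (hRs0 i) (SchwartzMap.pderivCLM ℝ (Pi.single i 1) φ)
    have hshift : ∀ (i : Fin (n+1)) (ε : ℝ), 0 < ε →
        ∫ x : Fin (n+1) → ℝ, Qfun R i (ε⁻¹ • x)
            * (SchwartzMap.pderivCLM ℝ (Pi.single i 1) φ) x
          = ∫ x : Fin (n+1) → ℝ, Rs i (ε⁻¹ • x)
            * (SchwartzMap.pderivCLM ℝ (Pi.single i 1) φ) x := by
      intro i ε hε
      obtain ⟨C, hC0, hC⟩ := bounded_of_per (Qfun_continuous hc hp i) (Qfun_per hc hp i)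
      have hint : Integrable (fun x : Fin (n+1) → ℝ =>
          Qfun R i (ε⁻¹ • x) * (SchwartzMap.pderivCLM ℝ (Pi.single i 1) φ) x) :=
        (SchwartzMap.pderivCLM ℝ (Pi.single i 1) φ).integrable.bdd_mul (c := C)
          (((Qfun_continuous hc hp i).comp (continuous_id.const_smul ε⁻¹)).aestronglyMeasurable)
          (Eventually.of_forall fun x => hC _)
      have hint2 : Integrable (fun x : Fin (n+1) → ℝ =>
          qc i * (SchwartzMap.pderivCLM ℝ (Pi.single i 1) φ) x) :=
        (SchwartzMap.pderivCLM ℝ (Pi.single i 1) φ).integrable.const_mul _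
      have : (fun x : Fin (n+1) → ℝ =>
          Rs i (ε⁻¹ • x) * (SchwartzMap.pderivCLM ℝ (Pi.single i 1) φ) x)
          = fun x => Qfun R i (ε⁻¹ • x) * (SchwartzMap.pderivCLM ℝ (Pi.single i 1) φ) x
            - qc i * (SchwartzMap.pderivCLM ℝ (Pi.single i 1) φ) x := by
        funext x
        simp only [hRs]
        ring
      rw [this, integral_sub hint hint2, integral_const_mul, integral_pderiv_zero]
      ring
    have hlim : Tendsto (fun ε : ℝ => ∑ i : Fin (n+1),
        -((∫ x : Fin (n+1) → ℝ, Rs i (ε⁻¹ • x)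
          * (SchwartzMap.pderivCLM ℝ (Pi.single i 1) φ) x) / ε ^ k))
        (𝓝[>] (0:ℝ)) (𝓝 0) := by
      have := tendsto_finset_sum (Finset.univ : Finset (Fin (n+1)))
        (fun i _ => (hIH i).neg)
      simpa using this
    apply hlim.congr'
    filter_upwards [self_mem_nhdsWithin] with ε (hε : ε ∈ Ioi (0:ℝ))
    rw [key_identity hc hp h0 φ hε]
    rw [Finset.sum_congr rfl fun i _ => hshift i ε hε]
    have hne : ε ≠ 0 := ne_of_gt hε
    rw [pow_succ, neg_mul, neg_div, mul_comm (ε^k) ε, mul_div_mul_left _ _ hne]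
    rw [Finset.sum_neg_distrib, ← Finset.sum_div]


end Stmt8Aux

open MeasureTheory Filter

theorem stmt_8 (d : ℕ) (hd : 1 ≤ d)
    (P : (Fin d → ℝ) → ℝ) (hPcont : Continuous P)
    (hPper : ∀ (x : Fin d → ℝ) (k : Fin d → ℤ), P (x + fun i => (k i : ℝ)) = P x)
    (hPavg : ∫ x in Set.Icc (0 : Fin d → ℝ) 1, P x = 0)
    (φ : SchwartzMap (Fin d → ℝ) ℝ) :
    ∀ k : ℕ, Tendsto (fun ε : ℝ => (∫ x : Fin d → ℝ, P (ε⁻¹ • x) * φ x) / ε ^ k)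
      (nhdsWithin 0 (Set.Ioi 0)) (nhds 0) := by
  obtain ⟨n, rfl⟩ : ∃ n, d = n + 1 := ⟨d - 1, (Nat.succ_pred_eq_of_pos hd).symm⟩
  intro k
  exact Stmt8Aux.master k P hPcont (fun x kk => hPper x kk) hPavg φ
end
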